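/- Let b : [s₁, s₂] → ℝ be C¹ and N₀ : [s₁,s₂] → [0,∞) integrable, and suppose there are constants θ > 0 and C₁ with (3/4)b(s)² + b'(s)/θ ≤ C₁ N₀(s) for all s, and |b(s)| ≤ κ ≤ 1. Then for each m ∈ {2,3,4}: ∫_{s₁}^{s₂} |b(s)|^m ds ≤ C (κ^{m−2} ∫_{s₁}^{s₂} N₀(s) ds + |b(s₁)|^{m−1} + |b(s₂)|^{m−1}) for a constant C depending only on θ, C₁. -/

import Mathlib

open MeasureTheory intervalIntegral Filter Topology

lemma hasDerivAt_mul_abs_pow (k : ℕ) (x : ℝ) :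
    HasDerivAt (fun y : ℝ => y * |y| ^ k) (((k : ℝ) + 1) * |x| ^ k) x := by
  rcases lt_trichotomy x 0 with hx | rfl | hx
  · have h : (fun y : ℝ => y * |y| ^ k) =ᶠ[𝓝 x] fun y => (-1 : ℝ) ^ k * y ^ (k + 1) := by
      filter_upwards [Iio_mem_nhds hx] with y hy
      rw [abs_of_neg hy]; ring
    have hd : HasDerivAt (fun y : ℝ => (-1 : ℝ) ^ k * y ^ (k + 1))
        ((-1 : ℝ) ^ k * (((k : ℝ) + 1) * x ^ k)) x := by
      simpa using (hasDerivAt_pow (k + 1) x).const_mul ((-1 : ℝ) ^ k)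
    have := hd.congr_of_eventuallyEq h
    have e : ((k:ℝ) + 1) * |x| ^ k = (-1 : ℝ) ^ k * (((k : ℝ) + 1) * x ^ k) := by
      rw [abs_of_neg hx]; ring
    rw [e]; exact this
  · rcases Nat.eq_zero_or_pos k with rfl | hk
    · simpa using hasDerivAt_id' (0 : ℝ)
    · rw [hasDerivAt_iff_tendsto_slope]
      have h1 : Tendsto (fun y : ℝ => |y| ^ k) (𝓝[≠] (0:ℝ)) (𝓝 0) := by
        have : Tendsto (fun y : ℝ => |y| ^ k) (𝓝 (0:ℝ)) (𝓝 0) := by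
          simpa [zero_pow hk.ne'] using ((by fun_prop : Continuous (fun y : ℝ => |y| ^ k)).tendsto (0:ℝ))
        exact this.mono_left nhdsWithin_le_nhds
      have h2 : (fun y : ℝ => |y| ^ k) =ᶠ[𝓝[≠] (0:ℝ)] slope (fun y : ℝ => y * |y| ^ k) 0 := by
        filter_upwards [self_mem_nhdsWithin] with y hy
        simp only [Set.mem_compl_iff, Set.mem_singleton_iff] at hy
        rw [slope_def_field]
        field_simp
        ring
      have := h1.congr' h2
      simpa [zero_pow hk.ne'] using this
  · have h : (fun y : ℝ => y * |y| ^ k) =ᶠ[𝓝 x] fun y => y ^ (k + 1) := by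
      filter_upwards [Ioi_mem_nhds hx] with y hy
      rw [abs_of_pos hy]; ring
    have hd : HasDerivAt (fun y : ℝ => y ^ (k + 1)) (((k : ℝ) + 1) * x ^ k) x := by
      simpa using hasDerivAt_pow (k + 1) x
    have := hd.congr_of_eventuallyEq h
    have e : ((k:ℝ) + 1) * |x| ^ k = ((k : ℝ) + 1) * x ^ k := by
      rw [abs_of_pos hx]
    rw [e]; exact this

theorem stmt_19 (θ C₁ : ℝ) (hθ : 0 < θ) (hC₁ : 0 < C₁) :
    ∃ C > (0 : ℝ), ∀ (s₁ s₂ κ : ℝ) (b b' N₀ : ℝ → ℝ),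
      s₁ ≤ s₂ → 0 < κ → κ ≤ 1 →
      (∀ s ∈ Set.Icc s₁ s₂, HasDerivAt b (b' s) s) →
      ContinuousOn b' (Set.Icc s₁ s₂) →
      (∀ s ∈ Set.Icc s₁ s₂, 0 ≤ N₀ s) →
      IntegrableOn N₀ (Set.Icc s₁ s₂) →
      (∀ s ∈ Set.Icc s₁ s₂, (3 / 4) * (b s) ^ 2 + b' s / θ ≤ C₁ * N₀ s) →
      (∀ s ∈ Set.Icc s₁ s₂, |b s| ≤ κ) →
      ∀ m : ℕ, m ∈ ({2, 3, 4} : Set ℕ) →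
        ∫ s in s₁..s₂, |b s| ^ m ≤
          C * (κ ^ (m - 2) * (∫ s in s₁..s₂, N₀ s)
            + |b s₁| ^ (m - 1) + |b s₂| ^ (m - 1)) := by
  refine ⟨(4/3) * (C₁ + 1/θ), by positivity, ?_⟩
  intro s₁ s₂ κ b b' N₀ hs hκ0 hκ1 hderiv hb'cont hN₀ hN₀int hineq hbκ m hm
  have huIcc : Set.uIcc s₁ s₂ = Set.Icc s₁ s₂ := Set.uIcc_of_le hs
  have hbcont : ContinuousOn b (Set.Icc s₁ s₂) := fun s hsm =>
    ((hderiv s hsm).continuousAt).continuousWithinAt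
  obtain ⟨k, hmk⟩ : ∃ k : ℕ, m = k + 2 := by
    simp only [Set.mem_insert_iff, Set.mem_singleton_iff] at hm
    rcases hm with rfl | rfl | rfl
    exacts [⟨0, rfl⟩, ⟨1, rfl⟩, ⟨2, rfl⟩]
  subst hmk
  have hk2 : k + 2 - 2 = k := rfl
  have hk1 : k + 2 - 1 = k + 1 := rfl
  rw [hk2, hk1]
  set g : ℝ → ℝ := fun s => b s * |b s| ^ k with hg
  set G : ℝ → ℝ := fun s => ((k : ℝ) + 1) * |b s| ^ k * b' s with hG
  have hGderiv : ∀ s ∈ Set.Icc s₁ s₂, HasDerivAt g (G s) s := fun s hsm =>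
    (hasDerivAt_mul_abs_pow k (b s)).comp s (hderiv s hsm)
  have hGcont : ContinuousOn G (Set.Icc s₁ s₂) :=
    (continuousOn_const.mul ((hbcont.abs).pow k)).mul hb'cont
  have hGint : IntervalIntegrable G volume s₁ s₂ := by
    apply ContinuousOn.intervalIntegrable; rwa [huIcc]
  have hFTC : ∫ s in s₁..s₂, G s = g s₂ - g s₁ := by
    apply intervalIntegral.integral_eq_sub_of_hasDerivAt _ hGint
    intro s hsm; exact hGderiv s (huIcc ▸ hsm)
  have hNint' : IntervalIntegrable N₀ volume s₁ s₂ := by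
    apply IntegrableOn.intervalIntegrable; rwa [huIcc]
  have hbmcont : ContinuousOn (fun s => |b s| ^ (k + 2)) (Set.Icc s₁ s₂) :=
    (hbcont.abs).pow (k + 2)
  have hbmint : IntervalIntegrable (fun s => |b s| ^ (k + 2)) volume s₁ s₂ := by
    apply ContinuousOn.intervalIntegrable; rwa [huIcc]
  -- pointwise inequality
  have hpt : ∀ s ∈ Set.Icc s₁ s₂,
      (3/4) * |b s| ^ (k + 2) + G s / (((k : ℝ) + 1) * θ) ≤ (C₁ * κ ^ k) * N₀ s := by
    intro s hsm
    have h1 := hineq s hsm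
    have hk0 : (0:ℝ) < (k:ℝ) + 1 := by positivity
    have e1 : (3/4) * |b s| ^ (k + 2) + G s / (((k : ℝ) + 1) * θ)
        = |b s| ^ k * ((3/4) * (b s) ^ 2 + b' s / θ) := by
      have e2 : |b s| ^ (k + 2) = (b s) ^ 2 * |b s| ^ k := by
        rw [pow_add, sq_abs]; ring
      rw [e2, hG]
      field_simp
    rw [e1]
    calc |b s| ^ k * ((3/4) * (b s) ^ 2 + b' s / θ) ≤ |b s| ^ k * (C₁ * N₀ s) := by
          apply mul_le_mul_of_nonneg_left h1 (by positivity)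
      _ ≤ κ ^ k * (C₁ * N₀ s) := by
          apply mul_le_mul_of_nonneg_right
            (pow_le_pow_left₀ (abs_nonneg _) (hbκ s hsm) k)
          exact mul_nonneg hC₁.le (hN₀ s hsm)
      _ = (C₁ * κ ^ k) * N₀ s := by ring
  have hLHSint : IntervalIntegrable
      (fun s => (3/4) * |b s| ^ (k + 2) + G s / (((k : ℝ) + 1) * θ)) volume s₁ s₂ :=
    (hbmint.const_mul _).add (hGint.div_const _)
  have hRHSint : IntervalIntegrable (fun s => (C₁ * κ ^ k) * N₀ s) volume s₁ s₂ :=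
    hNint'.const_mul _
  have hmono := intervalIntegral.integral_mono_on hs hLHSint hRHSint hpt
  rw [intervalIntegral.integral_add (hbmint.const_mul _) (hGint.div_const _),
    intervalIntegral.integral_const_mul, intervalIntegral.integral_div, hFTC,
    intervalIntegral.integral_const_mul] at hmono
  -- abbreviations
  set I := ∫ s in s₁..s₂, |b s| ^ (k + 2)
  set J := ∫ s in s₁..s₂, N₀ s
  have hJ : 0 ≤ J := intervalIntegral.integral_nonneg hs (fun s hsm => hN₀ s hsm)
  have hgabs : ∀ s, |g s| = |b s| ^ (k + 1) := by
    intro s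
    rw [hg]; simp only
    rw [abs_mul, abs_pow, abs_abs, pow_succ']
  have hgb1 : |g s₁| = |b s₁| ^ (k + 1) := hgabs s₁
  have hgb2 : |g s₂| = |b s₂| ^ (k + 1) := hgabs s₂
  -- bound boundary term
  have hbd : g s₁ - g s₂ ≤ |b s₁| ^ (k + 1) + |b s₂| ^ (k + 1) := by
    calc g s₁ - g s₂ ≤ |g s₁| + |g s₂| := by
          have := abs_sub_abs_le_abs_sub (g s₁) (g s₂)
          have h1 := le_abs_self (g s₁)
          have h2 := neg_abs_le (g s₂)
          linarith
      _ = _ := by rw [hgb1, hgb2]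
  have hk0 : (0:ℝ) < (k:ℝ) + 1 := by positivity
  have hkθ : (0:ℝ) < ((k:ℝ) + 1) * θ := by positivity
  -- from hmono : (3/4) * I + (g s₂ - g s₁) / ((k+1)*θ) ≤ C₁ * κ^k * J
  have hI : (3/4) * I ≤ C₁ * κ ^ k * J + (g s₁ - g s₂) / (((k:ℝ) + 1) * θ) := by
    have : (g s₂ - g s₁) / (((k:ℝ) + 1) * θ) = -((g s₁ - g s₂) / (((k:ℝ) + 1) * θ)) := by
      ring
    linarith [hmono, this.ge]
  have hA1 : (0:ℝ) ≤ |b s₁| ^ (k + 1) := by positivity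
  have hA2 : (0:ℝ) ≤ |b s₂| ^ (k + 1) := by positivity
  have hκJ : 0 ≤ κ ^ k * J := by positivity
  have hbd2 : (g s₁ - g s₂) / (((k:ℝ) + 1) * θ)
      ≤ (|b s₁| ^ (k + 1) + |b s₂| ^ (k + 1)) / θ := by
    have h1 : (g s₁ - g s₂) / (((k:ℝ) + 1) * θ)
        ≤ (|b s₁| ^ (k + 1) + |b s₂| ^ (k + 1)) / (((k:ℝ) + 1) * θ) := by
      gcongr
    have h2 : (|b s₁| ^ (k + 1) + |b s₂| ^ (k + 1)) / (((k:ℝ) + 1) * θ)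
        ≤ (|b s₁| ^ (k + 1) + |b s₂| ^ (k + 1)) / θ := by
      apply div_le_div_of_nonneg_left (by positivity) hθ
      nlinarith [mul_nonneg (Nat.cast_nonneg k : (0:ℝ) ≤ (k:ℝ)) hθ.le]
    exact h1.trans h2
  have hfin : I ≤ (4/3) * (C₁ * (κ ^ k * J))
      + (4/(3*θ)) * (|b s₁| ^ (k + 1) + |b s₂| ^ (k + 1)) := by
    have e : (4/(3*θ)) * (|b s₁| ^ (k + 1) + |b s₂| ^ (k + 1))
        = (4/3) * ((|b s₁| ^ (k + 1) + |b s₂| ^ (k + 1)) / θ) := by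
      field_simp
    rw [e]
    linarith [hI, hbd2]
  calc I ≤ (4/3) * (C₁ * (κ ^ k * J))
      + (4/(3*θ)) * (|b s₁| ^ (k + 1) + |b s₂| ^ (k + 1)) := hfin
    _ ≤ (4/3) * (C₁ + 1/θ) * (κ ^ k * J + |b s₁| ^ (k + 1) + |b s₂| ^ (k + 1)) := by
        have h1θ : (0:ℝ) < 1/θ := by positivity
        have e2 : (4:ℝ)/(3*θ) = (4/3) * (1/θ) := by
          field_simp
        rw [e2]
        nlinarith [mul_nonneg hC₁.le hA1, mul_nonneg hC₁.le hA2,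
          mul_nonneg h1θ.le hκJ]
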